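/- Let E be a group and N a finite normal subgroup of E contained in the center of E, with quotient map π : E → E/N. Let H be a finite group whose order is coprime to the order of N, and let f : H → E/N be an injective group homomorphism. Then there exists an injective group homomorphism g : H → E such that π ∘ g = f. -/

import Mathlib

/-- If `N` is a finite central (hence normal) subgroup of `E` and `H` is a finite group of
order coprime to `|N|`, then any injective homomorphism `f : H → E/N` lifts to an
injective homomorphism `g : H → E` with `π ∘ g = f`. -/
theorem lift_injection_through_central_quotient {E H : Type*} [Group E] [Group H]
    [Finite H] (N : Subgroup E) [N.Normal] [Finite N]
    (hcentral : N ≤ Subgroup.center E)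
    (hcop : Nat.Coprime (Nat.card H) (Nat.card N))
    (f : H →* E ⧸ N) (hf : Function.Injective f) :
    ∃ g : H →* E, Function.Injective g ∧ (QuotientGroup.mk' N).comp g = f := by
  classical
  set π := QuotientGroup.mk' N
  set K : Subgroup (E ⧸ N) := f.range with hK
  set P : Subgroup E := K.comap π with hP
  have hNP : N ≤ P := by
    intro n hn
    simp only [hP, Subgroup.mem_comap]
    have : π n = 1 := (QuotientGroup.eq_one_iff n).mpr hn
    rw [this]; exact K.one_mem
  -- the restriction of π to P, landing in K
  set ψ : P →* K := π.subgroupComap K with hψ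
  have hψ_surj : Function.Surjective ψ := by
    rintro ⟨k, hk⟩
    obtain ⟨h, rfl⟩ := hk
    obtain ⟨e, he⟩ := QuotientGroup.mk'_surjective N (f h)
    have heP : e ∈ P := by
      simp only [hP, Subgroup.mem_comap, he]
      exact ⟨h, he.symm⟩
    exact ⟨⟨e, heP⟩, Subtype.ext he⟩
  set N' : Subgroup P := N.subgroupOf P with hN'
  have hker : ψ.ker = N' := by
    ext p
    simp only [MonoidHom.mem_ker, hN', Subgroup.mem_subgroupOf]
    constructor
    · intro hp
      have : π (p : E) = 1 := congrArg Subtype.val hp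
      exact (QuotientGroup.eq_one_iff _).mp this
    · intro hp
      exact Subtype.ext ((QuotientGroup.eq_one_iff _).mpr hp)
  haveI : N'.Normal := by
    constructor
    intro n hn g
    have : (n : E) ∈ Subgroup.center E := hcentral ((Subgroup.mem_subgroupOf).mp hn)
    have hcomm : (g : E) * n * (g : E)⁻¹ = (n : E) := by
      rw [Subgroup.mem_center_iff.mp this g]
      group
    rw [Subgroup.mem_subgroupOf]
    simpa [hcomm] using (Subgroup.mem_subgroupOf.mp hn)
  haveI : Finite N' := Finite.of_equiv _ (Subgroup.subgroupOfEquivOfLe hNP).symm.toEquiv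
  have hcardN' : Nat.card N' = Nat.card N :=
    Nat.card_congr (Subgroup.subgroupOfEquivOfLe hNP).toEquiv
  have hcardK : Nat.card K = Nat.card H :=
    (Nat.card_congr (MonoidHom.ofInjective hf).toEquiv).symm
  have hindex : N'.index = Nat.card H := by
    rw [← hker, Subgroup.index_ker, ← hcardK]
    have : ψ.range = ⊤ := MonoidHom.range_eq_top.mpr hψ_surj
    rw [this]
    exact Nat.card_congr Subgroup.topEquiv.toEquiv
  obtain ⟨C, hC⟩ := Subgroup.exists_right_complement'_of_coprime
    (N := N') (by rw [hcardN', hindex]; exact hcop.symm)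
  -- χ : C → K is bijective
  set χ : C →* K := ψ.comp C.subtype with hχ
  have hχ_inj : Function.Injective χ := by
    rw [injective_iff_map_eq_one]
    intro c hc
    have hcN : (c : P) ∈ N' := by rw [← hker]; exact hc
    have := hC.disjoint.le_bot ⟨hcN, c.2⟩
    exact Subtype.ext (Subgroup.mem_bot.mp this)
  have hχ_surj : Function.Surjective χ := by
    intro k
    obtain ⟨p, hp⟩ := hψ_surj k
    obtain ⟨⟨n, c⟩, hnc⟩ := hC.existsUnique p |>.exists
    refine ⟨c, ?_⟩
    have hn1 : ψ (n : P) = 1 := MonoidHom.mem_ker.mp (hker.ge n.2)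
    have : ψ ((n : P) * (c : P)) = k := by rw [hnc]; exact hp
    rwa [map_mul, hn1, one_mul] at this
  let χe : C ≃* K := MulEquiv.ofBijective χ ⟨hχ_inj, hχ_surj⟩
  -- assemble g
  let g : H →* E := P.subtype.comp ((C.subtype.comp χe.symm.toMonoidHom).comp f.rangeRestrict)
  have hπg : ∀ h : H, π (g h) = f h := by
    intro h
    have : χ (χe.symm (f.rangeRestrict h)) = f.rangeRestrict h := χe.apply_symm_apply _
    have := congrArg Subtype.val this
    exact this
  refine ⟨g, ?_, ?_⟩
  · intro a b hab
    apply hf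
    rw [← hπg a, ← hπg b, hab]
  · ext h
    exact hπg h
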